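/- Every Scott-open filter of a frame is strongly exact: if F is a Scott-open filter of a frame L, M ⊆ F, and the meet ⋀M is strongly exact, then ⋀M ∈ F. -/

import Mathlib

/-- A filter of a frame: a nonempty, upward-closed subset closed under binary meets. -/
def IsFrameFilter {L : Type*} [Order.Frame L] (F : Set L) : Prop :=
  F.Nonempty ∧ (∀ x y : L, x ∈ F → x ≤ y → y ∈ F) ∧ (∀ x y : L, x ∈ F → y ∈ F → x ⊓ y ∈ F)

/-- The open sublocale `𝔬(a) = {x | a → x = x}`. -/
def opn {L : Type*} [Order.Frame L] (a : L) : Set L := {x | a ⇨ x = x}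

/-- The meet of `M` is strongly exact if `⋂_{m∈M} 𝔬(m) = 𝔬(⋀M)`. -/
def StronglyExactMeet {L : Type*} [Order.Frame L] (M : Set L) : Prop :=
  (⋂ m ∈ M, opn m) = opn (sInf M)

/-- The meet of `M` is exact if `(⋀M) ∨ b = ⋀_{m∈M}(m ∨ b)` for every `b`. -/
def ExactMeet {L : Type*} [Order.Frame L] (M : Set L) : Prop :=
  ∀ b : L, sInf M ⊔ b = ⨅ m ∈ M, (m ⊔ b)

/-- A strongly exact filter. -/
def IsStronglyExactFilter {L : Type*} [Order.Frame L] (F : Set L) : Prop :=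
  IsFrameFilter F ∧ ∀ M ⊆ F, StronglyExactMeet M → sInf M ∈ F

/-- An exact filter. -/
def IsExactFilter {L : Type*} [Order.Frame L] (F : Set L) : Prop :=
  IsFrameFilter F ∧ ∀ M ⊆ F, ExactMeet M → sInf M ∈ F

/-- A Scott-open filter. -/
def IsScottOpenFilter {L : Type*} [Order.Frame L] (F : Set L) : Prop :=
  IsFrameFilter F ∧
    ∀ D : Set L, D.Nonempty → DirectedOn (· ≤ ·) D → sSup D ∈ F → ∃ d ∈ D, d ∈ F

/-- A completely prime filter: a proper filter such that `⋁A ∈ F` implies `a ∈ F`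
for some `a ∈ A`. -/
def IsCompletelyPrimeFilter {L : Type*} [Order.Frame L] (F : Set L) : Prop :=
  IsFrameFilter F ∧ F ≠ Set.univ ∧ ∀ A : Set L, sSup A ∈ F → ∃ a ∈ A, a ∈ F

/-- The closed filter `𝔠f(a) = {x | x ∨ a = 1}`. -/
def closedFilter {L : Type*} [Order.Frame L] (a : L) : Set L := {x | x ⊔ a = ⊤}

/-- A regular filter: one of the form `{x | ∀ b ∈ F, x ∨ b = 1}` for some filter `F`. -/
def IsRegularFilter {L : Type*} [Order.Frame L] (G : Set L) : Prop :=
  ∃ F : Set L, IsFrameFilter F ∧ G = {x : L | ∀ b ∈ F, x ⊔ b = ⊤}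

/-- Subfitness of a frame. -/
def Subfit (L : Type*) [Order.Frame L] : Prop :=
  ∀ a b : L, (∀ c : L, a ⊔ c = ⊤ → b ⊔ c = ⊤) → a ≤ b

/-- A sublocale: a subset closed under all meets and under `a → (-)` for all `a`. -/
def IsSublocale {L : Type*} [Order.Frame L] (S : Set L) : Prop :=
  (∀ A ⊆ S, sInf A ∈ S) ∧ ∀ a : L, ∀ s ∈ S, (a ⇨ s) ∈ S

/-- The fitting of a sublocale: intersection of the open sublocales above it. -/
def fitSl {L : Type*} [Order.Frame L] (S : Set L) : Set L :=
  ⋂ a ∈ {a : L | S ⊆ opn a}, opn a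

/-- The sublocale `⋂_{a∈F} 𝔬(a)` associated to a filter `F`. -/
def fts {L : Type*} [Order.Frame L] (F : Set L) : Set L := ⋂ a ∈ F, opn a

/-- The filter `{a | S ⊆ 𝔬(a)}` associated to a sublocale `S`. -/
def stf {L : Type*} [Order.Frame L] (S : Set L) : Set L := {a : L | S ⊆ opn a}

open OrdinalApprox

section aux
variable {L : Type*} [Order.Frame L]

/-- Closure of a set under nonempty finite meets. -/
def meetClosure (M : Set L) : Set L :=
  {x | ∃ s : Finset L, ∃ hs : s.Nonempty, ↑s ⊆ M ∧ x = s.inf' hs id}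

lemma subset_meetClosure (M : Set L) : M ⊆ meetClosure M := by
  intro m hm
  exact ⟨{m}, Finset.singleton_nonempty m, by simpa, by simp⟩

lemma meetClosure_subset_filter {M F : Set L} (hF : IsFrameFilter F) (hM : M ⊆ F) :
    meetClosure M ⊆ F := by
  rintro x ⟨s, hs, hsM, rfl⟩
  induction hs using Finset.Nonempty.cons_induction with
  | singleton a => exact hM (by simpa using hsM)
  | cons a s ha hs ih =>
      rw [Finset.inf'_cons hs]
      have hsM' : (↑s : Set L) ⊆ M := by
        intro y hy; exact hsM (by simp [hy])
      exact hF.2.2 _ _ (hM (hsM (by simp))) (ih hsM')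

lemma meetClosure_inf {M : Set L} {x y : L} (hx : x ∈ meetClosure M)
    (hy : y ∈ meetClosure M) : x ⊓ y ∈ meetClosure M := by
  classical
  obtain ⟨s, hs, hsM, rfl⟩ := hx
  obtain ⟨t, ht, htM, rfl⟩ := hy
  refine ⟨s ∪ t, hs.mono Finset.subset_union_left, ?_, ?_⟩
  · intro z hz
    rcases Finset.mem_union.1 hz with h | h
    · exact hsM h
    · exact htM h
  · apply le_antisymm
    · apply Finset.le_inf'
      intro b hb
      rcases Finset.mem_union.1 hb with h | h
      · exact inf_le_left.trans (Finset.inf'_le id h)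
      · exact inf_le_right.trans (Finset.inf'_le id h)
    · apply le_inf <;> (apply Finset.le_inf'; intro b hb)
      · exact Finset.inf'_le id (Finset.mem_union_left _ hb)
      · exact Finset.inf'_le id (Finset.mem_union_right _ hb)

lemma sInf_le_meetClosure {M : Set L} {x : L} (hx : x ∈ meetClosure M) : sInf M ≤ x := by
  obtain ⟨s, hs, hsM, rfl⟩ := hx
  apply Finset.le_inf'
  intro b hb
  exact sInf_le (hsM hb)

end aux


theorem stmt1 {L : Type*} [Order.Frame L] (F : Set L) (hF : IsScottOpenFilter F)
    (M : Set L) (hM : M ⊆ F) (hse : StronglyExactMeet M) :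
    sInf M ∈ F := by
  obtain ⟨⟨⟨f₀, hf₀⟩, hup, hmeet⟩, hscott⟩ := hF
  have htop : (⊤ : L) ∈ F := hup _ _ hf₀ le_top
  rcases M.eq_empty_or_nonempty with rfl | hMne
  · simpa using htop
  set a := sInf M with ha
  set M' := meetClosure M with hM'
  have hM'F : M' ⊆ F := meetClosure_subset_filter ⟨⟨f₀, hf₀⟩, hup, hmeet⟩ hM
  -- the prenucleus
  set q : L →o L := ⟨fun y => a ⊔ ⨆ m ∈ M', m ⇨ y, by
    intro y z hyz
    apply sup_le_sup_left
    apply iSup_le; intro m; apply iSup_le; intro hm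
    exact le_trans (himp_le_himp_left hyz) (le_iSup_of_le m (le_iSup_of_le hm le_rfl))⟩ with hq
  have h_init : a ≤ q a := le_sup_left
  -- key claim: descending along the approximation
  have key : ∀ α : Ordinal, lfpApprox q a α ∈ F → a ∈ F := by
    intro α
    induction α using Ordinal.induction with
    | h α ih =>
      intro hα
      rw [lfpApprox] at hα
      set S : Set L := {x | ∃ b : Ordinal, ∃ _ : b < α, q (lfpApprox q a b) = x} ∪ {a} with hS
      have hSne : S.Nonempty := ⟨a, Or.inr rfl⟩
      have hSdir : DirectedOn (· ≤ ·) S := by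
        rintro x (⟨b, hb, rfl⟩ | rfl) y (⟨c, hc, rfl⟩ | rfl)
        · rcases le_total b c with h | h
          · exact ⟨_, Or.inl ⟨c, hc, rfl⟩, q.monotone (lfpApprox_monotone q h), le_rfl⟩
          · exact ⟨_, Or.inl ⟨b, hb, rfl⟩, le_rfl, q.monotone (lfpApprox_monotone q h)⟩
        · exact ⟨_, Or.inl ⟨b, hb, rfl⟩, le_rfl, le_sup_left⟩
        · exact ⟨_, Or.inl ⟨c, hc, rfl⟩, le_sup_left, le_rfl⟩
        · exact ⟨a, Or.inr rfl, le_rfl, le_rfl⟩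
      obtain ⟨d, hdS, hdF⟩ := hscott S hSne hSdir (hup _ _ hα (sup_le (le_sSup (Or.inr rfl)) (iSup₂_le fun b hb => le_sSup (Or.inl ⟨b, hb, rfl⟩))))
      rcases hdS with ⟨b, hb, rfl⟩ | rfl
      · -- d = q (lfpApprox q a b) ∈ F; peel off one more sup
        set y := lfpApprox q a b with hy
        have hay : a ≤ y := le_lfpApprox q
        set D : Set L := insert a ((fun m => m ⇨ y) '' M') with hD
        have hqD : q y = sSup D := by
          rw [hD, sSup_insert, sSup_image]
          rfl
        have hDne : D.Nonempty := ⟨a, Set.mem_insert _ _⟩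
        have hDdir : DirectedOn (· ≤ ·) D := by
          rintro x (rfl | ⟨m, hm, rfl⟩) z (rfl | ⟨n, hn, rfl⟩)
          · exact ⟨a, Set.mem_insert _ _, le_rfl, le_rfl⟩
          · refine ⟨n ⇨ y, Set.mem_insert_of_mem _ ⟨n, hn, rfl⟩, ?_, le_rfl⟩
            exact le_trans hay (le_himp_iff.2 inf_le_left)
          · refine ⟨m ⇨ y, Set.mem_insert_of_mem _ ⟨m, hm, rfl⟩, le_rfl, ?_⟩
            exact le_trans hay (le_himp_iff.2 inf_le_left)
          · refine ⟨(m ⊓ n) ⇨ y, Set.mem_insert_of_mem _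
              ⟨m ⊓ n, meetClosure_inf hm hn, rfl⟩, ?_, ?_⟩
            · exact himp_le_himp_right inf_le_left
            · exact himp_le_himp_right inf_le_right
        rw [hqD] at hdF
        obtain ⟨d', hd'D, hd'F⟩ := hscott D hDne hDdir hdF
        rcases hd'D with rfl | ⟨m, hm, rfl⟩
        · exact hd'F
        · have hyF : y ∈ F := hup _ _ (hmeet _ _ (hM'F hm) hd'F) inf_himp_le
          exact ih b hb hyF
      · exact hdF
  -- the fixed point is ⊤
  set β := Cardinal.ord (Order.succ (Cardinal.mk L)) with hβ
  have hfix : q (lfpApprox q a β) = lfpApprox q a β :=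
    lfpApprox_ord_mem_fixedPoint q h_init
  set w := lfpApprox q a β with hw
  have haw : a ≤ w := le_lfpApprox q
  have hwopn : ∀ m ∈ M, m ⇨ w = w := by
    intro m hm
    apply le_antisymm
    · calc m ⇨ w ≤ a ⊔ ⨆ m' ∈ M', m' ⇨ w :=
            le_sup_of_le_right (le_iSup_of_le m (le_iSup_of_le (subset_meetClosure M hm) le_rfl))
        _ = w := hfix
    · exact le_himp_iff.2 inf_le_left
  have hwmem : w ∈ ⋂ m ∈ M, opn m := by
    simp only [Set.mem_iInter]
    intro m hm
    exact hwopn m hm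
  rw [hse] at hwmem
  have : a ⇨ w = w := hwmem
  have hwt : w = ⊤ := by rw [← this, himp_eq_top_iff.2 haw]
  exact key β (by rw [← hw, hwt]; exact htop)
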